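/- With B the spectral scale of c and I_t = {z ∈ ℂ : (t, z) ∈ B} the isotrace slice at t ∈ (0,1), if 0 < s < t < 1 then (s/t)·I_t ⊆ I_s; consequently the sets Δ_t = {z/t : z ∈ I_t} are increasing as t decreases, and their union Δ(B \ {0}) = {z/x : (x,z) ∈ B, x ≠ 0} is convex. -/

import Mathlib

/-- Let `B ⊆ ℝ × ℂ` be the spectral scale: a compact convex set containing the
origin whose first coordinates lie in `[0,1]`, with isotrace slices
`I t = {z : (t, z) ∈ B}`.  If `0 < s < t < 1` then `(s/t) • I t ⊆ I s`, hence
`Δ_t = I_t / t ⊆ Δ_s = I_s / s`, and the union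
`Δ(B \ {0}) = {z / x : (x, z) ∈ B, x ≠ 0}` is convex. -/
theorem isotrace_slices_nested_and_range_convex
    (B : Set (ℝ × ℂ)) (hconv : Convex ℝ B) (hcpt : IsCompact B)
    (h0 : ((0 : ℝ), (0 : ℂ)) ∈ B)
    (hcoord : ∀ p ∈ B, 0 ≤ p.1 ∧ p.1 ≤ 1)
    (s t : ℝ) (hs : 0 < s) (hst : s < t) (ht : t < 1) :
    ((fun z : ℂ => ((s / t : ℝ) : ℂ) * z) '' {z : ℂ | (t, z) ∈ B}
        ⊆ {z : ℂ | (s, z) ∈ B}) ∧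
    ({w : ℂ | ∃ z : ℂ, (t, z) ∈ B ∧ w = z / (t : ℂ)} ⊆
        {w : ℂ | ∃ z : ℂ, (s, z) ∈ B ∧ w = z / (s : ℂ)}) ∧
    Convex ℝ {w : ℂ | ∃ x : ℝ, ∃ z : ℂ, (x, z) ∈ B ∧ x ≠ 0 ∧ w = z / (x : ℂ)} := by
  have ht0 : (0 : ℝ) < t := hs.trans hst
  have hts : (0 : ℝ) ≤ 1 - s / t := by
    have : s / t < 1 := (div_lt_one ht0).2 hst
    linarith
  have part1 : (fun z : ℂ => ((s / t : ℝ) : ℂ) * z) '' {z : ℂ | (t, z) ∈ B}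
      ⊆ {z : ℂ | (s, z) ∈ B} := by
    rintro w ⟨z, hz, rfl⟩
    have h := hconv (a := s / t) (b := 1 - s / t) hz h0 (by positivity) hts (by ring)
    have he : (s / t) • ((t : ℝ), z) + (1 - s / t) • ((0 : ℝ), (0 : ℂ))
        = ((s : ℝ), ((s / t : ℝ) : ℂ) * z) := by
      ext
      · show s / t * t + (1 - s / t) * 0 = s
        field_simp
        ring
      · show (s / t) • z + (1 - s / t) • (0 : ℂ) = ((s / t : ℝ) : ℂ) * z
        simp [Complex.real_smul]
    rw [he] at h
    exact h
  refine ⟨part1, ?_, ?_⟩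
  · rintro w ⟨z, hz, rfl⟩
    refine ⟨((s / t : ℝ) : ℂ) * z, part1 ⟨z, hz, rfl⟩, ?_⟩
    have hsC : (s : ℂ) ≠ 0 := by exact_mod_cast hs.ne'
    have htC : (t : ℂ) ≠ 0 := by exact_mod_cast ht0.ne'
    push_cast
    field_simp
  · rintro w1 ⟨x1, z1, hB1, hx1, rfl⟩ w2 ⟨x2, z2, hB2, hx2, rfl⟩ a b ha hb hab
    have hx1p : 0 < x1 := lt_of_le_of_ne (hcoord _ hB1).1 (Ne.symm hx1)
    have hx2p : 0 < x2 := lt_of_le_of_ne (hcoord _ hB2).1 (Ne.symm hx2)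
    set D : ℝ := a * x2 + b * x1 with hD
    have hDpos : 0 < D := by
      rcases lt_or_ge 0 a with h | h
      · have : 0 < a * x2 := mul_pos h hx2p
        nlinarith [mul_nonneg hb hx1p.le]
      · have hb1 : b = 1 - a := by linarith
        have : 0 < b := by nlinarith
        nlinarith [mul_nonneg ha hx2p.le, mul_pos this hx1p]
    set α : ℝ := a * x2 / D with hα
    have hα0 : 0 ≤ α := by positivity
    have hα1 : α ≤ 1 := by
      rw [hα, div_le_one hDpos]
      nlinarith [mul_nonneg hb hx1p.le]
    have hmem := hconv hB1 hB2 hα0 (by linarith : (0:ℝ) ≤ 1 - α) (by ring)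
    set x : ℝ := α * x1 + (1 - α) * x2 with hx
    set z : ℂ := (α : ℂ) * z1 + ((1 - α : ℝ) : ℂ) * z2 with hz
    have he : α • ((x1 : ℝ), z1) + (1 - α) • ((x2 : ℝ), z2) = (x, z) := by
      ext
      · simp [hx]
      · simp [hz, Complex.real_smul]
    rw [he] at hmem
    have hxval : x = x1 * x2 / D := by
      rw [hx, hα]; field_simp; linear_combination x1 * hab
    have hxp : 0 < x := by rw [hxval]; positivity
    refine ⟨x, z, hmem, hxp.ne', ?_⟩
    have hx1C : (x1 : ℂ) ≠ 0 := by exact_mod_cast hx1p.ne'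
    have hx2C : (x2 : ℂ) ≠ 0 := by exact_mod_cast hx2p.ne'
    have hxC : (x : ℂ) ≠ 0 := by exact_mod_cast hxp.ne'
    have hDC : (D : ℂ) ≠ 0 := by exact_mod_cast hDpos.ne'
    have hxCval : (x : ℂ) = (x1 : ℂ) * x2 / D := by exact_mod_cast hxval
    have habR : b = 1 - a := by linarith
    simp only [smul_eq_mul, Complex.real_smul]
    rw [hz]
    have hD2R : a * x2 - a * x1 + x1 ≠ 0 := by
      have : a * x2 - a * x1 + x1 = D := by rw [hD, habR]; ring
      rw [this]; exact hDpos.ne'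
    have hD2C : (a : ℂ) * x2 - (a : ℂ) * x1 + (x1 : ℂ) ≠ 0 := by
      exact_mod_cast hD2R
    push_cast [hα, hD, hxval, habR]
    field_simp [hD2C]
    linear_combination (-((a : ℂ) * x2 * (z1 - z2))) *
      (inv_mul_cancel₀ hD2C)
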